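/- Let C > 0 and let p satisfy 1 < p ≤ ∞. Let (W_n) be a sequence of P-variables with ‖W_n‖_p ≤ C for every n, and let W be a P-variable with d_M(W_n, W) → 0 as n → ∞. Then ‖W‖_p ≤ C. -/

import Mathlib

set_option autoImplicit false

open MeasureTheory Set
open scoped ENNReal NNReal

noncomputable section

/-- `ℝ^n` with the Euclidean metric. -/
abbrev RE (n : ℕ) : Type := EuclideanSpace ℝ (Fin n)

/-- The random vector `(f₁(x₁), f₁(x₂), …, f_k(x₁), f_k(x₂), W(x₁,x₂,x₁₂))`. -/
def sVec {Ω₁ Ω₂ : Type*} (k : ℕ) (f : Fin k → Ω₁ → ℝ)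
    (W : Ω₁ × Ω₁ × Ω₂ → ℝ) (x : Ω₁ × Ω₁ × Ω₂) : RE (2 * k + 1) :=
  (WithLp.equiv 2 (Fin (2 * k + 1) → ℝ)).symm fun i =>
    if _ : (i : ℕ) < 2 * k then
      if (i : ℕ) % 2 = 0 then f ⟨(i : ℕ) / 2, by omega⟩ x.1
      else f ⟨(i : ℕ) / 2, by omega⟩ x.2.1
    else W x

/-- `S(f₁,…,f_k,W)`: the pushforward of the product measure `P₁ ⊗ P₁ ⊗ P₂` under `sVec`. -/
def Smeasure {Ω₁ Ω₂ : Type*} [MeasurableSpace Ω₁] [MeasurableSpace Ω₂]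
    (P₁ : Measure Ω₁) (P₂ : Measure Ω₂) {k : ℕ} (f : Fin k → Ω₁ → ℝ)
    (W : Ω₁ × Ω₁ × Ω₂ → ℝ) : Measure (RE (2 * k + 1)) :=
  (P₁.prod (P₁.prod P₂)).map (sVec k f W)

/-- The `k`-profile `S_k(W)`. -/
def SkSet {Ω₁ Ω₂ : Type*} [MeasurableSpace Ω₁] [MeasurableSpace Ω₂]
    (P₁ : Measure Ω₁) (P₂ : Measure Ω₂) (k : ℕ)
    (W : Ω₁ × Ω₁ × Ω₂ → ℝ) : Set (Measure (RE (2 * k + 1))) :=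
  {μ | ∃ f : Fin k → Ω₁ → ℝ, (∀ i, Measurable (f i)) ∧
    (∀ i x, f i x ∈ Icc (-1 : ℝ) 1) ∧ μ = Smeasure P₁ P₂ f W}

/-- A function partition: `{0,1}`-valued measurable functions summing to `1`. -/
def IsFunctionPartition {Ω₁ : Type*} [MeasurableSpace Ω₁] {k : ℕ}
    (f : Fin k → Ω₁ → ℝ) : Prop :=
  (∀ i, Measurable (f i)) ∧ (∀ i x, f i x = 0 ∨ f i x = 1) ∧ ∀ x, ∑ i, f i x = 1

/-- The restricted `k`-profile `S'_k(W)`. -/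
def SkSet' {Ω₁ Ω₂ : Type*} [MeasurableSpace Ω₁] [MeasurableSpace Ω₂]
    (P₁ : Measure Ω₁) (P₂ : Measure Ω₂) (k : ℕ)
    (W : Ω₁ × Ω₁ × Ω₂ → ℝ) : Set (Measure (RE (2 * k + 1))) :=
  {μ | ∃ f : Fin k → Ω₁ → ℝ, IsFunctionPartition f ∧ μ = Smeasure P₁ P₂ f W}

/-- Hausdorff edistance (w.r.t. the Lévy–Prokhorov distance) between sets of measures. -/
def eHausLP {X : Type*} [MeasurableSpace X] [PseudoEMetricSpace X]
    (A B : Set (Measure X)) : ℝ≥0∞ :=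
  max (⨆ μ ∈ A, ⨅ ν ∈ B, levyProkhorovEDist μ ν)
      (⨆ ν ∈ B, ⨅ μ ∈ A, levyProkhorovEDist μ ν)

/-- Hausdorff distance (w.r.t. the Lévy–Prokhorov distance) between sets of measures. -/
def dHLP {X : Type*} [MeasurableSpace X] [PseudoEMetricSpace X]
    (A B : Set (Measure X)) : ℝ := (eHausLP A B).toReal

/-- A `P`-variable: a measurable real-valued function on a product `Ω₁ × Ω₁ × Ω₂`
of probability spaces. -/
structure PVar where
  (Ω₁ : Type*)
  (Ω₂ : Type*)
  [m₁ : MeasurableSpace Ω₁]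
  [m₂ : MeasurableSpace Ω₂]
  (P₁ : Measure Ω₁)
  (P₂ : Measure Ω₂)
  (prob₁ : IsProbabilityMeasure P₁)
  (prob₂ : IsProbabilityMeasure P₂)
  (W : Ω₁ × Ω₁ × Ω₂ → ℝ)
  (meas : Measurable W)

attribute [instance] PVar.m₁ PVar.m₂

/-- The underlying product probability measure of a `P`-variable. -/
def PVar.vol (V : PVar) : Measure (V.Ω₁ × V.Ω₁ × V.Ω₂) := V.P₁.prod (V.P₁.prod V.P₂)

/-- The `k`-profile of a `P`-variable. -/
def PVar.Sk (V : PVar) (k : ℕ) : Set (Measure (RE (2 * k + 1))) := SkSet V.P₁ V.P₂ k V.W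

/-- The restricted `k`-profile of a `P`-variable. -/
def PVar.Sk' (V : PVar) (k : ℕ) : Set (Measure (RE (2 * k + 1))) := SkSet' V.P₁ V.P₂ k V.W

/-- The `P`-variables metric `d_M`. -/
def dM (V U : PVar) : ℝ :=
  ∑' k : ℕ, (2 : ℝ)⁻¹ ^ (k + 1) * dHLP (V.Sk (k + 1)) (U.Sk (k + 1))

universe u₁ u₂ u₃ u₄


/- ## Auxiliary material for the proof -/

open Metric Filter
open scoped Topology BoundedContinuousFunction

section AuxProof

lemma measurable_sVec {Ω₁ Ω₂ : Type*} [MeasurableSpace Ω₁] [MeasurableSpace Ω₂]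
    {k : ℕ} {f : Fin k → Ω₁ → ℝ} {W : Ω₁ × Ω₁ × Ω₂ → ℝ}
    (hf : ∀ i, Measurable (f i)) (hW : Measurable W) :
    Measurable (sVec k f W) := by
  unfold sVec
  refine (WithLp.measurable_toLp 2 _).comp ?_
  apply measurable_pi_lambda
  intro i
  by_cases h : (i : ℕ) < 2 * k
  · simp only [h, dif_pos]
    split_ifs
    · exact (hf _).comp measurable_fst
    · exact (hf _).comp (measurable_fst.comp measurable_snd)
  · simp only [h, dif_neg, not_false_iff]
    exact hW

/-- The last coordinate of the random vector. -/
def projLast (k : ℕ) (y : RE (2 * k + 1)) : ℝ := y ⟨2 * k, by omega⟩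

lemma projLast_sVec {Ω₁ Ω₂ : Type*} (k : ℕ) (f : Fin k → Ω₁ → ℝ)
    (W : Ω₁ × Ω₁ × Ω₂ → ℝ) (x : Ω₁ × Ω₁ × Ω₂) :
    projLast k (sVec k f W x) = W x := by
  simp [projLast, sVec, WithLp.equiv_symm_apply]

lemma lipschitz_projLast (k : ℕ) : LipschitzWith 1 (projLast k) := by
  apply LipschitzWith.of_dist_le_mul
  intro y z
  rw [NNReal.coe_one, one_mul, EuclideanSpace.dist_eq]
  have h1 : dist (projLast k y) (projLast k z) =
      Real.sqrt (dist (y ⟨2*k, by omega⟩) (z ⟨2*k, by omega⟩) ^ 2) := by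
    rw [Real.sqrt_sq dist_nonneg]; rfl
  rw [h1]
  apply Real.sqrt_le_sqrt
  exact Finset.single_le_sum (f := fun i => dist (y i) (z i) ^ 2)
    (fun i _ => sq_nonneg _) (Finset.mem_univ _)

lemma measurable_projLast (k : ℕ) : Measurable (projLast k) :=
  (measurable_pi_apply _).comp (WithLp.measurable_ofLp 2 _)

/-- The Lévy–Prokhorov edistance does not increase under pushforward by 1-Lipschitz maps. -/
lemma levyProkhorovEDist_map_le {X Y : Type*} [MeasurableSpace X] [PseudoEMetricSpace X]
    [MeasurableSpace Y] [PseudoEMetricSpace Y] [OpensMeasurableSpace Y]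
    (μ ν : Measure X) {T : X → Y} (hTm : Measurable T) (hTl : LipschitzWith 1 T) :
    levyProkhorovEDist (μ.map T) (ν.map T) ≤ levyProkhorovEDist μ ν := by
  have key : ∀ (μ ν : Measure X) (ε : ℝ≥0∞) (B : Set Y),
      levyProkhorovEDist μ ν < ε → MeasurableSet B →
      (μ.map T) B ≤ (ν.map T) (thickening ε.toReal B) + ε := by
    intro μ ν ε B hlt hB
    rw [Measure.map_apply hTm hB, Measure.map_apply hTm isOpen_thickening.measurableSet]
    have hsub : thickening ε.toReal (T ⁻¹' B) ⊆ T ⁻¹' (thickening ε.toReal B) := by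
      intro y hy
      obtain ⟨x, hxB, hxy⟩ := (Metric.mem_thickening_iff_exists_edist_lt _ _).mp hy
      exact (Metric.mem_thickening_iff_exists_edist_lt _ _).mpr
        ⟨T x, hxB, lt_of_le_of_lt (by simpa using hTl y x) hxy⟩
    calc μ (T ⁻¹' B) ≤ ν (thickening ε.toReal (T ⁻¹' B)) + ε :=
          left_measure_le_of_levyProkhorovEDist_lt hlt (hTm hB)
      _ ≤ ν (T ⁻¹' (thickening ε.toReal B)) + ε :=
          add_le_add_left (measure_mono hsub) ε
  apply levyProkhorovEDist_le_of_forall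
  intro ε B hδε hεtop hB
  exact ⟨key μ ν ε B hδε hB,
    key ν μ ε B (by rwa [levyProkhorovEDist_comm]) hB⟩

/-- The law (distribution) of a `P`-variable. -/
def lawOf (V : PVar) : Measure ℝ := V.vol.map V.W

instance vol_prob (V : PVar) : IsProbabilityMeasure V.vol := by
  haveI := V.prob₁; haveI := V.prob₂
  unfold PVar.vol; infer_instance

instance lawOf_prob (V : PVar) : IsProbabilityMeasure (lawOf V) := by
  haveI := vol_prob V
  exact Measure.isProbabilityMeasure_map V.meas.aemeasurable

lemma Sk_mem_prob (V : PVar) {k : ℕ} {μ : Measure (RE (2 * k + 1))} (hμ : μ ∈ V.Sk k) :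
    IsProbabilityMeasure μ := by
  obtain ⟨f, hf, -, rfl⟩ := hμ
  haveI := V.prob₁; haveI := V.prob₂
  exact Measure.isProbabilityMeasure_map (measurable_sVec hf V.meas).aemeasurable

lemma Sk_map_projLast (V : PVar) {k : ℕ} {μ : Measure (RE (2 * k + 1))} (hμ : μ ∈ V.Sk k) :
    μ.map (projLast k) = lawOf V := by
  obtain ⟨f, hf, -, rfl⟩ := hμ
  rw [Smeasure, Measure.map_map (measurable_projLast k) (measurable_sVec hf V.meas)]
  rw [lawOf, PVar.vol]
  congr 1
  funext x
  exact projLast_sVec k f V.W x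

lemma Sk_nonempty (V : PVar) (k : ℕ) : (V.Sk k).Nonempty :=
  ⟨Smeasure V.P₁ V.P₂ (fun _ _ => 0) V.W, fun _ _ => 0, fun _ => measurable_const,
    fun _ _ => ⟨by norm_num, by norm_num⟩, rfl⟩

lemma edist_law_le_eHaus (A B : PVar) (k : ℕ) :
    levyProkhorovEDist (lawOf A) (lawOf B) ≤ eHausLP (A.Sk k) (B.Sk k) := by
  obtain ⟨μ₀, hμ₀⟩ := Sk_nonempty A k
  refine le_trans ?_ (le_max_left _ _)
  refine le_trans ?_ (le_iSup₂ (f := fun μ (_ : μ ∈ A.Sk k) => ⨅ ν ∈ B.Sk k,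
    levyProkhorovEDist μ ν) μ₀ hμ₀)
  apply le_iInf₂
  intro ν hν
  calc levyProkhorovEDist (lawOf A) (lawOf B)
      = levyProkhorovEDist (μ₀.map (projLast k)) (ν.map (projLast k)) := by
        rw [Sk_map_projLast A hμ₀, Sk_map_projLast B hν]
    _ ≤ levyProkhorovEDist μ₀ ν :=
        levyProkhorovEDist_map_le _ _ (measurable_projLast k) (lipschitz_projLast k)

lemma eHaus_le_one (A B : PVar) (k : ℕ) : eHausLP (A.Sk k) (B.Sk k) ≤ 1 := by
  obtain ⟨μ₀, hμ₀⟩ := Sk_nonempty A k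
  obtain ⟨ν₀, hν₀⟩ := Sk_nonempty B k
  have key : ∀ (μ ν : Measure (RE (2*k+1))), μ ∈ A.Sk k → ν ∈ B.Sk k →
      levyProkhorovEDist μ ν ≤ 1 := by
    intro μ ν hμ hν
    haveI := Sk_mem_prob A hμ; haveI := Sk_mem_prob B hν
    simpa using levyProkhorovEDist_le_max_measure_univ μ ν
  apply max_le
  · apply iSup₂_le; intro μ hμ
    exact le_trans (iInf₂_le_of_le ν₀ hν₀ (key μ ν₀ hμ hν₀)) le_rfl
  · apply iSup₂_le; intro ν hν
    exact le_trans (iInf₂_le_of_le μ₀ hμ₀ (key μ₀ ν hμ₀ hν)) le_rfl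

lemma eHaus_ne_top (A B : PVar) (k : ℕ) : eHausLP (A.Sk k) (B.Sk k) ≠ ∞ :=
  fun h => by simpa [h] using eHaus_le_one A B k

lemma edist_law_le_ofReal_dHLP (A B : PVar) (k : ℕ) :
    levyProkhorovEDist (lawOf A) (lawOf B) ≤ ENNReal.ofReal (dHLP (A.Sk k) (B.Sk k)) := by
  rw [dHLP, ENNReal.ofReal_toReal (eHaus_ne_top A B k)]
  exact edist_law_le_eHaus A B k

lemma dHLP_nonneg (A B : PVar) (k : ℕ) : 0 ≤ dHLP (A.Sk k) (B.Sk k) := ENNReal.toReal_nonneg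

lemma dHLP_le_one (A B : PVar) (k : ℕ) : dHLP (A.Sk k) (B.Sk k) ≤ 1 := by
  rw [dHLP]
  calc (eHausLP (A.Sk k) (B.Sk k)).toReal ≤ (1 : ℝ≥0∞).toReal :=
    ENNReal.toReal_mono (by simp) (eHaus_le_one A B k)
    _ = 1 := by simp

lemma term_le_dM (A B : PVar) (k : ℕ) :
    (2 : ℝ)⁻¹ ^ (k + 1) * dHLP (A.Sk (k+1)) (B.Sk (k+1)) ≤ dM A B := by
  have hnn : ∀ j : ℕ, 0 ≤ (2 : ℝ)⁻¹ ^ (j + 1) * dHLP (A.Sk (j+1)) (B.Sk (j+1)) :=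
    fun j => mul_nonneg (by positivity) (dHLP_nonneg A B (j+1))
  have hle : ∀ j : ℕ, (2 : ℝ)⁻¹ ^ (j + 1) * dHLP (A.Sk (j+1)) (B.Sk (j+1)) ≤ (2 : ℝ)⁻¹ ^ (j+1) :=
    fun j => mul_le_of_le_one_right (by positivity) (dHLP_le_one A B (j+1))
  have hg : Summable (fun j : ℕ => (2:ℝ)⁻¹ * (2:ℝ)⁻¹ ^ j) :=
    (summable_geometric_of_lt_one (by norm_num) (by norm_num : (2:ℝ)⁻¹ < 1)).mul_left _
  have hsum : Summable (fun j : ℕ => (2 : ℝ)⁻¹ ^ (j + 1) * dHLP (A.Sk (j+1)) (B.Sk (j+1))) :=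
    Summable.of_nonneg_of_le hnn (fun j => (hle j).trans_eq (pow_succ' _ _)) hg
  exact Summable.le_tsum hsum k (fun j _ => hnn j)

section Extraction
variable (V : ℕ → PVar) (Vlim : PVar)

lemma dist_law_tendsto
    (hconv : Filter.Tendsto (fun n => dM (V n) Vlim) Filter.atTop (nhds 0)) :
    Filter.Tendsto (fun n => levyProkhorovDist (lawOf (V n)) (lawOf Vlim))
      Filter.atTop (nhds 0) := by
  apply squeeze_zero (fun n => ENNReal.toReal_nonneg)
    (g := fun n => 2 * dM (V n) Vlim)
  · intro n
    have h1 : levyProkhorovDist (lawOf (V n)) (lawOf Vlim) ≤ dHLP ((V n).Sk 1) (Vlim.Sk 1) := by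
      rw [levyProkhorovDist]
      calc (levyProkhorovEDist (lawOf (V n)) (lawOf Vlim)).toReal
          ≤ (ENNReal.ofReal (dHLP ((V n).Sk 1) (Vlim.Sk 1))).toReal :=
            ENNReal.toReal_mono ENNReal.ofReal_ne_top (edist_law_le_ofReal_dHLP (V n) Vlim 1)
        _ = dHLP ((V n).Sk 1) (Vlim.Sk 1) := ENNReal.toReal_ofReal (dHLP_nonneg _ _ 1)
    have h2 := term_le_dM (V n) Vlim 0
    norm_num at h2
    calc levyProkhorovDist (lawOf (V n)) (lawOf Vlim) ≤ dHLP ((V n).Sk 1) (Vlim.Sk 1) := h1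
      _ ≤ 2 * dM (V n) Vlim := by linarith
  · simpa using hconv.const_mul (2:ℝ)

lemma edist_law_eventually_lt
    (hconv : Filter.Tendsto (fun n => dM (V n) Vlim) Filter.atTop (nhds 0)) {ε : ℝ} (hε : 0 < ε) :
    ∀ᶠ n in Filter.atTop,
      levyProkhorovEDist (lawOf (V n)) (lawOf Vlim) < ENNReal.ofReal ε := by
  have h := dist_law_tendsto V Vlim hconv
  have h2 := (Metric.tendsto_nhds.mp h) ε hε
  filter_upwards [h2] with n hn
  rw [Real.dist_eq, sub_zero] at hn
  have habs : levyProkhorovDist (lawOf (V n)) (lawOf Vlim) < ε := by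
    have hnn : 0 ≤ levyProkhorovDist (lawOf (V n)) (lawOf Vlim) := ENNReal.toReal_nonneg
    rw [abs_of_nonneg hnn] at hn
    exact hn
  rw [← ENNReal.ofReal_toReal (levyProkhorovEDist_ne_top (lawOf (V n)) (lawOf Vlim))]
  exact ENNReal.ofReal_lt_ofReal_iff_of_nonneg ENNReal.toReal_nonneg |>.mpr habs

lemma law_weak_tendsto
    (hconv : Filter.Tendsto (fun n => dM (V n) Vlim) Filter.atTop (nhds 0)) :
    ∀ f : ℝ →ᵇ ℝ, Filter.Tendsto (fun n => ∫ x, f x ∂(lawOf (V n))) Filter.atTop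
      (nhds (∫ x, f x ∂(lawOf Vlim))) := by
  set Pn : ℕ → ProbabilityMeasure ℝ := fun n => ⟨lawOf (V n), lawOf_prob (V n)⟩ with hPn
  set Pl : ProbabilityMeasure ℝ := ⟨lawOf Vlim, lawOf_prob Vlim⟩ with hPl
  have hLP : Filter.Tendsto
      (fun n => (LevyProkhorov.toMeasureEquiv (α := ProbabilityMeasure ℝ)).symm (Pn n)) Filter.atTop
      (nhds ((LevyProkhorov.toMeasureEquiv (α := ProbabilityMeasure ℝ)).symm Pl)) := by
    rw [tendsto_iff_dist_tendsto_zero]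
    exact dist_law_tendsto V Vlim hconv
  have hcont := LevyProkhorov.continuous_toMeasure_probabilityMeasure (Ω := ℝ)
  have htend : Filter.Tendsto Pn Filter.atTop (nhds Pl) := by
    have := (hcont.tendsto _).comp hLP
    exact this
  rw [ProbabilityMeasure.tendsto_iff_forall_integral_tendsto] at htend
  exact fun f => htend f

end Extraction

/-- The key analytic fact for finite `p`. -/
lemma lintegral_rpow_le_of_tendsto (C q : ℝ) (hC : 0 < C) (hq : 0 < q)
    (μs : ℕ → Measure ℝ) (μ : Measure ℝ) [∀ n, IsProbabilityMeasure (μs n)]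
    [IsProbabilityMeasure μ]
    (htend : ∀ f : ℝ →ᵇ ℝ, Tendsto (fun n => ∫ x, f x ∂(μs n)) atTop (𝓝 (∫ x, f x ∂μ)))
    (hb : ∀ n, ∫⁻ x, (‖x‖₊ : ℝ≥0∞) ^ q ∂(μs n) ≤ ENNReal.ofReal (C ^ q)) :
    ∫⁻ x, (‖x‖₊ : ℝ≥0∞) ^ q ∂μ ≤ ENNReal.ofReal (C ^ q) := by
  set G : ℕ → ℝ → ℝ := fun M x => (|x| ⊓ (M : ℝ)) ^ q with hG
  have cont : ∀ M : ℕ, Continuous (G M) :=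
    fun M => Continuous.rpow_const (continuous_abs.min continuous_const)
      (fun x => Or.inr hq.le)
  have nn : ∀ (M : ℕ) (x : ℝ), 0 ≤ G M x := by
    intro M x
    apply Real.rpow_nonneg
    exact le_min (abs_nonneg x) (Nat.cast_nonneg M)
  have ub : ∀ (M : ℕ) (x : ℝ), G M x ≤ (M : ℝ) ^ q := fun M x =>
    Real.rpow_le_rpow (le_min (abs_nonneg x) (Nat.cast_nonneg M)) (min_le_right _ _) hq.le
  set F : ℕ → ℝ →ᵇ ℝ := fun M =>
    BoundedContinuousFunction.mkOfBound ⟨G M, cont M⟩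
      ((M : ℝ) ^ q)
      (fun x y => by
        simp only [ContinuousMap.coe_mk, Real.dist_eq]
        rw [abs_sub_le_iff]
        constructor <;> nlinarith [nn M x, nn M y, ub M x, ub M y]) with hF
  have hFapp : ∀ M x, F M x = G M x := fun M x => rfl
  have hdom : ∀ (M : ℕ) (x : ℝ), ENNReal.ofReal (G M x) ≤ (‖x‖₊ : ℝ≥0∞) ^ q := by
    intro M x
    rw [← enorm_eq_nnnorm, Real.enorm_eq_ofReal_abs, ENNReal.ofReal_rpow_of_nonneg (abs_nonneg x) hq.le]
    exact ENNReal.ofReal_le_ofReal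
      (Real.rpow_le_rpow (le_min (abs_nonneg x) (Nat.cast_nonneg M)) (min_le_left _ _) hq.le)
  have key1 : ∀ (M n : ℕ), ∫ x, G M x ∂(μs n) ≤ C ^ q := by
    intro M n
    rw [integral_eq_lintegral_of_nonneg_ae (Filter.Eventually.of_forall fun x => nn M x)
      ((cont M).aestronglyMeasurable)]
    have h2 : ∫⁻ x, ENNReal.ofReal (G M x) ∂(μs n) ≤ ENNReal.ofReal (C ^ q) :=
      le_trans (lintegral_mono fun x => hdom M x) (hb n)
    calc (∫⁻ x, ENNReal.ofReal (G M x) ∂(μs n)).toReal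
        ≤ (ENNReal.ofReal (C ^ q)).toReal := ENNReal.toReal_mono ENNReal.ofReal_ne_top h2
      _ = C ^ q := ENNReal.toReal_ofReal (Real.rpow_nonneg hC.le q)
  have key2 : ∀ M : ℕ, ∫ x, G M x ∂μ ≤ C ^ q := by
    intro M
    have ht := htend (F M)
    simp only [hFapp] at ht
    exact le_of_tendsto ht (Filter.Eventually.of_forall fun n => key1 M n)
  have key3 : ∀ M : ℕ, ∫⁻ x, ENNReal.ofReal (G M x) ∂μ ≤ ENNReal.ofReal (C ^ q) := by
    intro M
    have hfin : ∫⁻ x, ENNReal.ofReal (G M x) ∂μ ≠ ∞ := by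
      apply ne_of_lt
      calc ∫⁻ x, ENNReal.ofReal (G M x) ∂μ ≤ ∫⁻ _, ENNReal.ofReal ((M:ℝ)^q) ∂μ :=
            lintegral_mono fun x => ENNReal.ofReal_le_ofReal (ub M x)
        _ = ENNReal.ofReal ((M:ℝ)^q) := by simp
        _ < ∞ := ENNReal.ofReal_lt_top
    have heq := integral_eq_lintegral_of_nonneg_ae (μ := μ)
      (Filter.Eventually.of_forall fun x => nn M x) ((cont M).aestronglyMeasurable)
    rw [← ENNReal.ofReal_toReal hfin]
    apply ENNReal.ofReal_le_ofReal
    rw [← heq]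
    exact key2 M
  have hmono : Monotone fun (M : ℕ) (x : ℝ) => ENNReal.ofReal (G M x) := by
    intro M M' hMM' x
    apply ENNReal.ofReal_le_ofReal
    exact Real.rpow_le_rpow (le_min (abs_nonneg x) (Nat.cast_nonneg M))
      (le_min (min_le_left _ _) (le_trans (min_le_right _ _) (Nat.cast_le.mpr hMM'))) hq.le
  have hsup : ∀ x : ℝ, (⨆ M : ℕ, ENNReal.ofReal (G M x)) = (‖x‖₊ : ℝ≥0∞) ^ q := by
    intro x
    apply le_antisymm
    · exact iSup_le fun M => hdom M x
    · have hM : G (⌈|x|⌉₊) x = |x| ^ q := by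
        rw [hG]; simp only []
        rw [min_eq_left (Nat.le_ceil _)]
      rw [← enorm_eq_nnnorm, Real.enorm_eq_ofReal_abs, ENNReal.ofReal_rpow_of_nonneg (abs_nonneg x) hq.le]
      refine le_trans (le_of_eq ?_) (le_iSup _ (⌈|x|⌉₊ : ℕ))
      rw [hM]
  calc ∫⁻ x, (‖x‖₊ : ℝ≥0∞) ^ q ∂μ = ∫⁻ x, ⨆ M : ℕ, ENNReal.ofReal (G M x) ∂μ := by
        simp_rw [hsup]
    _ = ⨆ M : ℕ, ∫⁻ x, ENNReal.ofReal (G M x) ∂μ :=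
        lintegral_iSup (fun M => ((cont M).measurable).ennreal_ofReal) hmono
    _ ≤ ENNReal.ofReal (C ^ q) := iSup_le key3

/-- The key analytic fact for `p = ∞`. -/
lemma meas_abs_gt_eq_zero_of_LP (C : ℝ) (hC : 0 < C)
    (μs : ℕ → Measure ℝ) (μ : Measure ℝ) [∀ n, IsProbabilityMeasure (μs n)]
    [IsProbabilityMeasure μ]
    (hcl : ∀ ε : ℝ, 0 < ε → ∃ n, levyProkhorovEDist (μs n) μ < ENNReal.ofReal ε)
    (h0 : ∀ n, μs n {x : ℝ | C < |x|} = 0) :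
    μ {x : ℝ | C < |x|} = 0 := by
  set B : ℕ → Set ℝ := fun j => {x : ℝ | C + 1/(j+1) ≤ |x|} with hB
  have hBj : ∀ j, μ (B j) = 0 := by
    intro j
    have key : ∀ ε : ℝ, 0 < ε → ε < 1/(j+1) → μ (B j) ≤ ENNReal.ofReal ε := by
      intro ε hε hεlt
      obtain ⟨n, hn⟩ := hcl ε hε
      have hmble : MeasurableSet (B j) := by
        have : B j = (fun x : ℝ => |x|) ⁻¹' (Ici (C + 1/(j+1))) := rfl
        rw [this]
        exact measurable_abs measurableSet_Ici
      have h1 := right_measure_le_of_levyProkhorovEDist_lt hn hmble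
      have hsub : thickening (ENNReal.ofReal ε).toReal (B j) ⊆ {x : ℝ | C < |x|} := by
        intro y hy
        rw [ENNReal.toReal_ofReal hε.le] at hy
        obtain ⟨z, hz, hd⟩ := Metric.mem_thickening_iff.mp hy
        have h3 : C + 1/(j+1) ≤ |z| := hz
        have hd' : |y - z| < ε := by rwa [Real.dist_eq] at hd
        have h4 : |z| - |y| ≤ |y - z| := by
          have := abs_sub_abs_le_abs_sub z y
          rwa [abs_sub_comm] at this
        simp only [mem_setOf_eq]
        linarith
      calc μ (B j) ≤ μs n (thickening (ENNReal.ofReal ε).toReal (B j)) + ENNReal.ofReal ε := h1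
        _ ≤ μs n {x : ℝ | C < |x|} + ENNReal.ofReal ε :=
            add_le_add_left (measure_mono hsub) _
        _ = ENNReal.ofReal ε := by rw [h0 n, zero_add]
    have hle0 : μ (B j) ≤ 0 := by
      apply ENNReal.le_of_forall_pos_le_add
      intro ε hε _
      rw [zero_add]
      set ε' : ℝ := min (ε/2 : ℝ) (1/(2*(j+1))) with hε'
      have hε'pos : 0 < ε' := by
        apply lt_min
        · exact half_pos (by exact_mod_cast hε)
        · positivity
      have hε'lt : ε' < 1/(j+1) := by
        apply lt_of_le_of_lt (min_le_right _ _)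
        rw [div_lt_div_iff₀ (by positivity) (by positivity)]
        nlinarith [Nat.cast_nonneg (α := ℝ) j]
      calc μ (B j) ≤ ENNReal.ofReal ε' := key ε' hε'pos hε'lt
        _ ≤ ENNReal.ofReal (ε/2) := ENNReal.ofReal_le_ofReal (min_le_left _ _)
        _ ≤ (ε : ℝ≥0∞) := by
            rw [← ENNReal.ofReal_coe_nnreal]
            apply ENNReal.ofReal_le_ofReal
            have h5 : (0:ℝ) < ε := hε
            linarith
    exact le_antisymm (le_trans hle0 (le_refl 0)) zero_le
  have hsub2 : {x : ℝ | C < |x|} ⊆ ⋃ j, B j := by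
    intro x hx
    simp only [mem_setOf_eq] at hx
    obtain ⟨j, hj⟩ := exists_nat_one_div_lt (show 0 < |x| - C by linarith)
    exact mem_iUnion.mpr ⟨j, by simp only [hB, mem_setOf_eq]; linarith⟩
  exact le_antisymm (le_trans (measure_mono hsub2) (le_of_eq (measure_iUnion_null hBj)))
    zero_le

end AuxProof

/-- If `‖W_n‖_p ≤ C` for every `n` (with `1 < p ≤ ∞`) and
`d_M(W_n, W) → 0`, then `‖W‖_p ≤ C`. -/
theorem eLpNorm_le_of_dM_tendsto_zero
    (C : ℝ) (hC : 0 < C) (p : ℝ≥0∞) (hp : 1 < p)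
    (V : ℕ → PVar.{u₁, u₂}) (Vlim : PVar.{u₃, u₄})
    (hbound : ∀ n, eLpNorm (V n).W p (V n).vol ≤ ENNReal.ofReal C)
    (hconv : Filter.Tendsto (fun n => dM (V n) Vlim) Filter.atTop (nhds 0)) :
    eLpNorm Vlim.W p Vlim.vol ≤ ENNReal.ofReal C := by
  haveI : ∀ n, IsProbabilityMeasure (lawOf (V n)) := fun n => lawOf_prob _
  haveI := lawOf_prob Vlim
  -- rewrite everything in terms of the laws
  have hmapVlim : eLpNorm Vlim.W p Vlim.vol = eLpNorm id p (lawOf Vlim) := by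
    rw [lawOf, eLpNorm_map_measure aestronglyMeasurable_id Vlim.meas.aemeasurable]
    rfl
  have hmapn : ∀ n, eLpNorm id p (lawOf (V n)) ≤ ENNReal.ofReal C := by
    intro n
    rw [lawOf, eLpNorm_map_measure aestronglyMeasurable_id (V n).meas.aemeasurable]
    exact hbound n
  rw [hmapVlim]
  by_cases hptop : p = ∞
  · -- the case p = ∞
    subst hptop
    have h0 : ∀ n, (lawOf (V n)) {y : ℝ | C < |y|} = 0 := by
      intro n
      have h1 : eLpNormEssSup id (lawOf (V n)) ≤ ENNReal.ofReal C := by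
        simpa [eLpNorm_exponent_top] using hmapn n
      have h2 : ∀ᵐ y ∂(lawOf (V n)), (‖y‖₊ : ℝ≥0∞) ≤ ENNReal.ofReal C := by
        filter_upwards [enorm_ae_le_eLpNormEssSup (id : ℝ → ℝ) (lawOf (V n))] with y hy
        exact le_trans hy h1
      have h3 : {y : ℝ | C < |y|} ⊆ {y : ℝ | ¬ ((‖y‖₊:ℝ≥0∞) ≤ ENNReal.ofReal C)} := by
        intro y hy
        simp only [mem_setOf_eq, not_le]
        rw [← enorm_eq_nnnorm, Real.enorm_eq_ofReal_abs]
        exact (ENNReal.ofReal_lt_ofReal_iff (lt_trans hC hy)).mpr hy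
      exact measure_mono_null h3 (ae_iff.mp h2)
    have hcl : ∀ ε : ℝ, 0 < ε →
        ∃ n, levyProkhorovEDist (lawOf (V n)) (lawOf Vlim) < ENNReal.ofReal ε :=
      fun ε hε => (edist_law_eventually_lt V Vlim hconv hε).exists
    have hlim0 : (lawOf Vlim) {y : ℝ | C < |y|} = 0 :=
      meas_abs_gt_eq_zero_of_LP C hC _ _ hcl h0
    have hae : ∀ᵐ y ∂(lawOf Vlim), ‖id y‖ ≤ C := by
      rw [ae_iff]
      have hset : {y : ℝ | ¬ ‖id y‖ ≤ C} = {y : ℝ | C < |y|} := by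
        ext y; simp [Real.norm_eq_abs, not_le]
      rw [hset]
      exact hlim0
    calc eLpNorm id ∞ (lawOf Vlim)
        ≤ (lawOf Vlim) Set.univ ^ (∞ : ℝ≥0∞).toReal⁻¹ * ENNReal.ofReal C :=
          eLpNorm_le_of_ae_bound hae
      _ = ENNReal.ofReal C := by simp
  · -- the case p < ∞
    have hp0 : p ≠ 0 := (lt_trans zero_lt_one hp).ne'
    set q := p.toReal with hqdef
    have hq : 0 < q := ENNReal.toReal_pos hp0 hptop
    have hlint : ∀ (ν : Measure ℝ),
        ∫⁻ y, (‖y‖₊ : ℝ≥0∞) ^ q ∂ν = (eLpNorm id p ν) ^ q := by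
      intro ν
      rw [eLpNorm_eq_lintegral_rpow_enorm_toReal hp0 hptop, ← ENNReal.rpow_mul, one_div,
        inv_mul_cancel₀ hq.ne', ENNReal.rpow_one]
      simp only [id_eq, enorm_eq_nnnorm, hqdef]
    have hb : ∀ n, ∫⁻ y, (‖y‖₊ : ℝ≥0∞) ^ q ∂(lawOf (V n)) ≤ ENNReal.ofReal (C ^ q) := by
      intro n
      rw [hlint, ← ENNReal.ofReal_rpow_of_nonneg hC.le hq.le]
      exact ENNReal.rpow_le_rpow (hmapn n) hq.le
    have hkey := lintegral_rpow_le_of_tendsto C q hC hq (fun n => lawOf (V n)) (lawOf Vlim)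
      (law_weak_tendsto V Vlim hconv) hb
    rw [← ENNReal.rpow_one (eLpNorm id p (lawOf Vlim)), ← div_self hq.ne',
      div_eq_mul_one_div, ENNReal.rpow_mul, ← hlint (lawOf Vlim)]
    calc (∫⁻ y, (‖y‖₊ : ℝ≥0∞) ^ q ∂(lawOf Vlim)) ^ (1/q)
        ≤ (ENNReal.ofReal (C ^ q)) ^ (1/q) := ENNReal.rpow_le_rpow hkey (by positivity)
      _ = ENNReal.ofReal C := by
          rw [← ENNReal.ofReal_rpow_of_nonneg hC.le hq.le, ← ENNReal.rpow_mul,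
            mul_one_div, div_self hq.ne', ENNReal.rpow_one]


end
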